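/- In the warm-up reduction (all indegrees of H at most 2), a set S ⊆ V_H is a feasible solution to the DVD instance (L, H) — i.e., every path of L vertices in H contains a vertex of S — if and only if S is a feasible bootstrap solution for (L, G). Moreover, if S ⊆ V is any feasible bootstrap solution for (L, G), then S ∩ V_H is a feasible DVD solution for (L, H). Hence the optimal values of the two instances are equal. -/

import Mathlib

/-- Colors of vertices in the circuit DAG. -/
inductive Color where
  | white | blue | red
deriving DecidableEq

/-- Number of red vertices on a path (given as a list of vertices). -/
def redCount {V : Type*} (color : V → Color) (p : List V) : ℕ :=
  (p.filter (fun v => decide (color v = Color.red))).length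

/-- `p` is an interesting path: it starts and ends at red vertices and traverses exactly
`L+1` red vertices. -/
def IntPath {V : Type*} (E : V → V → Prop) (color : V → Color) (L : ℕ) (p : List V) : Prop :=
  ∃ hp : p ≠ [], p.Chain' E ∧ color (p.head hp) = Color.red ∧
    color (p.getLast hp) = Color.red ∧ redCount color p = L + 1

variable {α : Type*} [Fintype α] [DecidableEq α]

/-- Vertex set of the warm-up reduction graph `G`: the original vertices `V_H` (`.inl v`),
their clones `V_H'` (`.inr (.inl v)`), and the white source `s₀` (`.inr (.inr ())`). -/
abbrev WV (α : Type*) := α ⊕ (α ⊕ Unit)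

/-- Colors in the reduction graph: original vertices and clones are red, `s₀` is white. -/
def wcolor : WV α → Color
  | .inl _ => Color.red
  | .inr (.inl _) => Color.red
  | .inr (.inr _) => Color.white

/-- Indegree of a vertex of `H`. -/
def windeg (EH : α → α → Prop) [DecidableRel EH] (v : α) : ℕ :=
  (Finset.univ.filter (fun u => EH u v)).card

/-- Edges of the warm-up reduction graph `G`: the edges of `H`, an edge from each `v` to its
clone `v'`, and an edge from `s₀` to each `v` of indegree at most 1 (so that `v` gets
`2 − indegree_H(v)` parallel copies in the multigraph; parallel multiplicities are
irrelevant for paths). -/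
def WE (EH : α → α → Prop) [DecidableRel EH] : WV α → WV α → Prop
  | .inl u, .inl v => EH u v
  | .inl u, .inr (.inl v) => u = v
  | .inr (.inr _), .inl v => windeg EH v ≤ 1
  | _, _ => False
set_option linter.unusedSectionVars false
section Aux
variable {α : Type*} [Fintype α] [DecidableEq α]

lemma clone_no_out (EH : α → α → Prop) [DecidableRel EH] (v : α) (z : WV α) :
    ¬ WE EH (.inr (.inl v)) z := by
  rcases z with a | b | c <;> simp [WE]

lemma redCount_all_red {p : List (WV α)} (h : ∀ z ∈ p, wcolor z = Color.red) :
    redCount wcolor p = p.length := by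
  unfold redCount
  rw [List.filter_eq_self.mpr (fun a ha => by simp [h a ha])]

lemma red_map_inl (q : List α) : ∀ z ∈ q.map (Sum.inl : α → WV α), wcolor z = Color.red := by
  intro z hz
  rcases List.mem_map.mp hz with ⟨u, _, rfl⟩
  rfl

/-- Structure of chains in `G` starting at a vertex of `V_H`. -/
lemma decomp (EH : α → α → Prop) [DecidableRel EH] :
    ∀ (p : List (WV α)) (a : α), p.Chain' (WE EH) → p.head? = some (Sum.inl a) →
    ∃ q : List α, q.Chain' EH ∧ q.head? = some a ∧
      (p = q.map Sum.inl ∨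
        ∃ v, q.getLast? = some v ∧ p = q.map Sum.inl ++ [Sum.inr (Sum.inl v)]) := by
  intro p
  induction p with
  | nil => intro a _ h; simp at h
  | cons x t ih =>
    intro a hchain hhead
    simp only [List.head?_cons, Option.some.injEq] at hhead
    subst hhead
    match t, hchain with
    | [], _ => exact ⟨[a], List.isChain_singleton a, rfl, Or.inl rfl⟩
    | (Sum.inl b) :: t', hchain =>
      replace hchain := List.isChain_cons_cons.mp hchain
      obtain ⟨h1, h2⟩ := hchain
      obtain ⟨q, hq, hqh, hdisj⟩ := ih b h2 rfl
      have hEH : EH a b := h1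
      refine ⟨a :: q, List.isChain_cons.mpr ⟨fun y hy => ?_, hq⟩, rfl, ?_⟩
      · rw [hqh] at hy; simp at hy; subst hy; exact hEH
      · match q, hqh with
        | b' :: q', hqh =>
          simp only [List.head?_cons, Option.some.injEq] at hqh
          subst hqh
          rcases hdisj with h | ⟨v, hv, h⟩
          · exact Or.inl (by rw [h]; rfl)
          · exact Or.inr ⟨v, by rw [List.getLast?_cons_cons]; exact hv, by rw [h]; rfl⟩
    | (Sum.inr (Sum.inl b)) :: t', hchain =>
      replace hchain := List.isChain_cons_cons.mp hchain
      obtain ⟨h1, h2⟩ := hchain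
      have hab : a = b := h1
      subst hab
      match t', h2 with
      | [], _ => exact ⟨[a], List.isChain_singleton a, rfl, Or.inr ⟨a, rfl, rfl⟩⟩
      | c :: t'', h2 =>
        replace h2 := List.isChain_cons_cons.mp h2
        exact absurd h2.1 (clone_no_out EH a c)
    | (Sum.inr (Sum.inr u)) :: t', hchain =>
      replace hchain := List.isChain_cons_cons.mp hchain
      exact absurd hchain.1 (by simp [WE])

/-- Every chain of `L` vertices in `H` extends (by the clone of its last vertex) to an
interesting path whose non-final vertices are exactly the original chain. -/
lemma build_path (EH : α → α → Prop) [DecidableRel EH] (L : ℕ) (hL : 2 ≤ L)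
    (q : List α) (hq : q.Chain' EH) (hlen : q.length = L) :
    ∃ v, q.getLast? = some v ∧
      IntPath (WE EH) wcolor L (q.map Sum.inl ++ [Sum.inr (Sum.inl v)]) := by
  have hne : q ≠ [] := by intro h; rw [h] at hlen; simp at hlen; omega
  obtain ⟨v, hv⟩ := Option.isSome_iff_exists.mp (List.getLast?_isSome.mpr hne)
  refine ⟨v, hv, ?_⟩
  set p : List (WV α) := q.map Sum.inl ++ [Sum.inr (Sum.inl v)] with hp
  have hpne : p ≠ [] := by simp [hp]
  refine ⟨hpne, ?_, ?_, ?_, ?_⟩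
  · show List.IsChain _ _; rw [List.isChain_append]
    refine ⟨(List.isChain_map _).mpr hq, List.isChain_singleton _, ?_⟩
    intro x hx y hy
    simp only [List.head?_cons, Option.mem_def, Option.some.injEq] at hy
    subst hy
    rw [List.getLast?_map, hv] at hx
    simp only [Option.mem_def, Option.map_some, Option.some.injEq] at hx
    subst hx
    show (v = v); rfl
  · obtain ⟨b, q', rfl⟩ := List.exists_cons_of_ne_nil hne
    rfl
  · rw [List.getLast_append]
    rfl
  · have : ∀ z ∈ p, wcolor z = Color.red := by
      intro z hz
      rw [hp, List.mem_append] at hz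
      rcases hz with hz | hz
      · exact red_map_inl q z hz
      · simp at hz; subst hz; rfl
    rw [redCount_all_red this, hp]
    simp [hlen]

end Aux

/-- in the warm-up reduction (all indegrees of `H` at most 2), `S ⊆ V_H` is a
feasible DVD solution for `(L,H)` iff (viewed inside `G`) it is a feasible bootstrap solution
for `(L,G)`; moreover for any feasible bootstrap solution `S' ⊆ V`, `S' ∩ V_H` is a feasible
DVD solution; hence the optimal values of the two instances are equal. -/
theorem stmt13 (EH : α → α → Prop) [DecidableRel EH]
    (hdag : WellFounded EH) (L : ℕ) (hL : 2 ≤ L)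
    (hdeg : ∀ v : α, windeg EH v ≤ 2) :
    (∀ S : Finset α,
      ((∀ q : List α, q.Chain' EH → q.length = L → ∃ u ∈ q, u ∈ S) ↔
        (∀ p : List (WV α), IntPath (WE EH) wcolor L p →
          ∃ z ∈ p.dropLast, z ∈ S.image Sum.inl))) ∧
    (∀ S' : Finset (WV α),
      (∀ p : List (WV α), IntPath (WE EH) wcolor L p → ∃ z ∈ p.dropLast, z ∈ S') →
      (∀ q : List α, q.Chain' EH → q.length = L → ∃ u ∈ q, Sum.inl u ∈ S')) ∧
    sInf {n : ℕ | ∃ S : Finset α,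
        (∀ q : List α, q.Chain' EH → q.length = L → ∃ u ∈ q, u ∈ S) ∧ S.card = n} =
    sInf {n : ℕ | ∃ S' : Finset (WV α),
        (∀ p : List (WV α), IntPath (WE EH) wcolor L p → ∃ z ∈ p.dropLast, z ∈ S') ∧
        S'.card = n} := by
  -- Part 2 first: it is used for part 1's backward direction.
  have part2 : ∀ S' : Finset (WV α),
      (∀ p : List (WV α), IntPath (WE EH) wcolor L p → ∃ z ∈ p.dropLast, z ∈ S') →
      (∀ q : List α, q.Chain' EH → q.length = L → ∃ u ∈ q, Sum.inl u ∈ S') := by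
    intro S' hS' q hq hlen
    obtain ⟨v, hv, hint⟩ := build_path EH L hL q hq hlen
    obtain ⟨z, hz, hzS⟩ := hS' _ hint
    rw [List.dropLast_concat] at hz
    rcases List.mem_map.mp hz with ⟨u, hu, rfl⟩
    exact ⟨u, hu, hzS⟩
  have part1 : ∀ S : Finset α,
      ((∀ q : List α, q.Chain' EH → q.length = L → ∃ u ∈ q, u ∈ S) ↔
        (∀ p : List (WV α), IntPath (WE EH) wcolor L p →
          ∃ z ∈ p.dropLast, z ∈ S.image Sum.inl)) := by
    intro S
    constructor
    · intro hS p hp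
      obtain ⟨hpne, hchain, hhead, hlast, hcount⟩ := hp
      obtain ⟨x, t, rfl⟩ := List.exists_cons_of_ne_nil hpne
      match x with
      | Sum.inl a =>
        obtain ⟨q, hq, hqh, hdisj⟩ := decomp EH _ a hchain rfl
        rcases hdisj with hpeq | ⟨v, hv, hpeq⟩
        · -- p = q.map inl, so q has L+1 vertices
          have hlen : q.length = L + 1 := by
            rw [hpeq, redCount_all_red (red_map_inl q), List.length_map] at hcount
            exact hcount
          have htake : (q.take L).Chain' EH := hq.prefix (List.take_prefix L q)
          have htlen : (q.take L).length = L := by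
            rw [List.length_take, hlen]; omega
          obtain ⟨u, hu, huS⟩ := hS _ htake htlen
          refine ⟨Sum.inl u, ?_, Finset.mem_image_of_mem _ huS⟩
          rw [hpeq, ← List.map_dropLast]
          refine List.mem_map_of_mem ?_
          rwa [List.dropLast_eq_take, hlen, Nat.add_sub_cancel]
        · -- p = q.map inl ++ [clone v], so q has L vertices
          have hlen : q.length = L := by
            rw [hpeq, redCount_all_red, List.length_append, List.length_map] at hcount
            · simpa using hcount
            · intro z hz
              rw [List.mem_append] at hz
              rcases hz with hz | hz
              · exact red_map_inl q z hz
              · simp at hz; subst hz; rfl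
          obtain ⟨u, hu, huS⟩ := hS q hq hlen
          refine ⟨Sum.inl u, ?_, Finset.mem_image_of_mem _ huS⟩
          rw [hpeq, List.dropLast_concat]
          exact List.mem_map_of_mem hu
      | Sum.inr (Sum.inl v) =>
        match t, hchain with
        | [], _ =>
          have : redCount wcolor [(Sum.inr (Sum.inl v) : WV α)] = 1 := by
            simp [redCount, wcolor]
          rw [this] at hcount
          omega
        | c :: t', hchain =>
          replace hchain := List.isChain_cons_cons.mp hchain
          exact absurd hchain.1 (clone_no_out EH v c)
      | Sum.inr (Sum.inr u) =>
        simp only [List.head_cons] at hhead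
        exact absurd hhead (by simp [wcolor])
    · intro hS q hq hlen
      obtain ⟨u, hu, huS⟩ := part2 (S.image Sum.inl) hS q hq hlen
      rcases Finset.mem_image.mp huS with ⟨w, hw, hweq⟩
      rw [Sum.inl.injEq] at hweq
      exact ⟨u, hu, hweq ▸ hw⟩
  refine ⟨part1, part2, ?_⟩
  set A := {n : ℕ | ∃ S : Finset α,
      (∀ q : List α, q.Chain' EH → q.length = L → ∃ u ∈ q, u ∈ S) ∧ S.card = n} with hA
  set B := {n : ℕ | ∃ S' : Finset (WV α),
      (∀ p : List (WV α), IntPath (WE EH) wcolor L p → ∃ z ∈ p.dropLast, z ∈ S') ∧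
      S'.card = n} with hB
  have hAne : A.Nonempty := by
    refine ⟨(Finset.univ : Finset α).card, Finset.univ, fun q hq hlen => ?_, rfl⟩
    have hne : q ≠ [] := by intro h; rw [h] at hlen; simp at hlen; omega
    exact ⟨q.head hne, List.head_mem hne, Finset.mem_univ _⟩
  have hsub : A ⊆ B := by
    rintro n ⟨S, hS, rfl⟩
    exact ⟨S.image Sum.inl, (part1 S).mp hS,
      Finset.card_image_of_injective S Sum.inl_injective⟩
  have hBne : B.Nonempty := hAne.mono hsub
  apply le_antisymm
  · obtain ⟨S', hS', hcard⟩ := Nat.sInf_mem hBne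
    set T : Finset α := Finset.univ.filter (fun u => (Sum.inl u : WV α) ∈ S') with hT
    have hTdvd : ∀ q : List α, q.Chain' EH → q.length = L → ∃ u ∈ q, u ∈ T := by
      intro q hq hlen
      obtain ⟨u, hu, huS⟩ := part2 S' hS' q hq hlen
      exact ⟨u, hu, Finset.mem_filter.mpr ⟨Finset.mem_univ _, huS⟩⟩
    have hcle : T.card ≤ S'.card := by
      rw [← Finset.card_image_of_injective T (Sum.inl_injective : Function.Injective (Sum.inl : α → WV α))]
      apply Finset.card_le_card
      intro z hz
      rcases Finset.mem_image.mp hz with ⟨u, hu, rfl⟩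
      exact (Finset.mem_filter.mp hu).2
    calc sInf A ≤ T.card := Nat.sInf_le ⟨T, hTdvd, rfl⟩
      _ ≤ S'.card := hcle
      _ = sInf B := hcard
  · exact Nat.sInf_le (hsub (Nat.sInf_mem hAne))
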